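/- (Desnanot–Jacobi / Dodgson condensation identity) Let R be a commutative ring and let A be an (n+2)×(n+2) matrix over R. Then det(A) · det(int(A)) = det(A₁) · det(A₂) − det(A₃) · det(A₄), where int(A) is the interior of A (the n×n matrix obtained by deleting the first and last rows and the first and last columns of A), A₁ is the (n+1)×(n+1) minor obtained by deleting the last row and last column, A₂ is the minor obtained by deleting the first row and first column, A₃ is the minor obtained by deleting the last row and first column, and A₄ is the minor obtained by deleting the first row and last column. -/

import Mathlib

open Matrix

section Aux

variable {n : ℕ}

/-- The equivalence `Fin 2 ⊕ Fin n ≃ Fin (n+2)` sending `inl 0 ↦ 0`, `inl 1 ↦ last`,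
`inr k ↦ k+1`. -/
def djE (n : ℕ) : (Fin 2 ⊕ Fin n) ≃ Fin (n + 2) where
  toFun s := Sum.elim (![0, Fin.last (n + 1)]) (fun k : Fin n => k.castSucc.succ) s
  invFun j :=
    if h0 : (j : ℕ) = 0 then Sum.inl 0
    else if h1 : (j : ℕ) = n + 1 then Sum.inl 1
    else Sum.inr ⟨(j : ℕ) - 1, by have := j.isLt; omega⟩
  left_inv := by
    rintro (i | k)
    · fin_cases i <;> simp [Fin.last]
    · have hk := k.isLt
      simp only [Sum.elim_inr, Fin.val_succ, Fin.coe_castSucc]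
      simp [show (k : ℕ) + 1 ≠ 0 by omega, show (k : ℕ) + 1 ≠ n + 1 by omega]
      omega
  right_inv := by
    intro j
    have hj := j.isLt
    dsimp only
    by_cases h0 : (j : ℕ) = 0
    · rw [dif_pos h0]
      simp [Fin.ext_iff, h0.symm]; omega
    · by_cases h1 : (j : ℕ) = n + 1
      · rw [dif_neg h0, dif_pos h1]
        simp [Fin.ext_iff, h1.symm]
      · rw [dif_neg h0, dif_neg h1]
        simp only [Sum.elim_inr, Fin.ext_iff, Fin.val_succ, Fin.coe_castSucc]
        omega

lemma djE_inl_zero : djE n (Sum.inl 0) = 0 := rfl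
lemma djE_inl_one : djE n (Sum.inl 1) = Fin.last (n + 1) := rfl
lemma djE_inr (k : Fin n) : djE n (Sum.inr k) = k.castSucc.succ := rfl

variable {α : Type*} [CommRing α] (A : Matrix (Fin (n + 2)) (Fin (n + 2)) α)

/-- The auxiliary matrix: identity with first and last columns replaced by the
corresponding columns of the adjugate, presented in block form through `djE`. -/
noncomputable def djB : Matrix (Fin (n + 2)) (Fin (n + 2)) α :=
  (fromBlocks
    (Matrix.of fun i j : Fin 2 => adjugate A (djE n (Sum.inl i)) (djE n (Sum.inl j)))
    0
    (Matrix.of fun (k : Fin n) (j : Fin 2) => adjugate A (djE n (Sum.inr k)) (djE n (Sum.inl j)))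
    1).submatrix (djE n).symm (djE n).symm

lemma djB_col (t : Fin (n + 2)) (l : Fin 2) :
    djB A t (djE n (Sum.inl l)) = adjugate A t (djE n (Sum.inl l)) := by
  unfold djB
  rw [submatrix_apply, Equiv.symm_apply_apply]
  obtain ⟨s, rfl⟩ := (djE n).surjective t
  rw [Equiv.symm_apply_apply]
  rcases s with i | k <;> simp [fromBlocks]

lemma djB_mid (t : Fin (n + 2)) (k : Fin n) :
    djB A t (djE n (Sum.inr k)) = if t = djE n (Sum.inr k) then 1 else 0 := by
  unfold djB
  rw [submatrix_apply, Equiv.symm_apply_apply]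
  obtain ⟨s, rfl⟩ := (djE n).surjective t
  rw [Equiv.symm_apply_apply]
  rcases s with i | k'
  · have hne : djE n (Sum.inl i) ≠ djE n (Sum.inr k) := by
      simp [(djE n).injective.eq_iff]
    simp [fromBlocks, hne]
  · simp [fromBlocks, one_apply, (djE n).injective.eq_iff]

lemma det_djB :
    (djB A).det =
      adjugate A 0 0 * adjugate A (Fin.last (n + 1)) (Fin.last (n + 1)) -
        adjugate A 0 (Fin.last (n + 1)) * adjugate A (Fin.last (n + 1)) 0 := by
  unfold djB
  rw [det_submatrix_equiv_self, det_fromBlocks_zero₁₂, det_one, mul_one, det_fin_two]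
  simp [djE_inl_zero, djE_inl_one]

lemma det_mul_djB :
    (A * djB A).det =
      A.det ^ 2 * (A.submatrix (fun i : Fin n => i.castSucc.succ)
        (fun j : Fin n => j.castSucc.succ)).det := by
  have key : (A * djB A).submatrix (djE n) (djE n) =
      fromBlocks (A.det • (1 : Matrix (Fin 2) (Fin 2) α))
        (Matrix.of fun (i : Fin 2) (k : Fin n) => A (djE n (Sum.inl i)) (djE n (Sum.inr k)))
        0
        (A.submatrix (fun i : Fin n => i.castSucc.succ) (fun j : Fin n => j.castSucc.succ)) := by
    ext s t
    rcases t with l | k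
    · have hcol : ∀ s', (A * djB A) s' (djE n (Sum.inl l)) =
          A.det * if s' = djE n (Sum.inl l) then 1 else 0 := by
        intro s'
        rw [mul_apply]
        rw [Finset.sum_congr rfl fun t _ => by rw [djB_col]]
        have := congrFun (congrFun (mul_adjugate A) s') (djE n (Sum.inl l))
        rw [mul_apply] at this
        rw [this, Matrix.smul_apply, one_apply, smul_eq_mul]
      rcases s with i | k'
      · rw [submatrix_apply, hcol]
        simp [fromBlocks, one_apply, (djE n).injective.eq_iff]
      · have hne : djE n (Sum.inr k') ≠ djE n (Sum.inl l) := by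
          simp [(djE n).injective.eq_iff]
        rw [submatrix_apply, hcol]
        simp [fromBlocks, hne]
    · have hmid : ∀ s', (A * djB A) s' (djE n (Sum.inr k)) =
          A s' (djE n (Sum.inr k)) := by
        intro s'
        rw [mul_apply]
        rw [Finset.sum_congr rfl fun t _ => by rw [djB_mid]]
        simp
      rcases s with i | k'
      · rw [submatrix_apply, hmid]
        simp [fromBlocks]
      · rw [submatrix_apply, hmid]
        simp [fromBlocks, djE_inr, submatrix_apply]
  have hdet : (A * djB A).det = ((A * djB A).submatrix (djE n) (djE n)).det :=
    (det_submatrix_equiv_self (djE n) _).symm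
  rw [hdet, key, det_fromBlocks_zero₂₁, det_smul, det_one, mul_one]
  simp [Fintype.card_fin]

/-- The multiplied-out Desnanot–Jacobi identity, valid over any commutative ring. -/
lemma dj_key :
    A.det * (A.det * (A.submatrix (fun i : Fin n => i.castSucc.succ)
        (fun j : Fin n => j.castSucc.succ)).det) =
      A.det * ((A.submatrix (fun i : Fin (n + 1) => i.castSucc)
          (fun j : Fin (n + 1) => j.castSucc)).det *
        (A.submatrix (fun i : Fin (n + 1) => i.succ)
          (fun j : Fin (n + 1) => j.succ)).det -
      (A.submatrix (fun i : Fin (n + 1) => i.castSucc)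
          (fun j : Fin (n + 1) => j.succ)).det *
        (A.submatrix (fun i : Fin (n + 1) => i.succ)
          (fun j : Fin (n + 1) => j.castSucc)).det) := by
  have h1 : A.det * (djB A).det = (A * djB A).det := (det_mul _ _).symm
  rw [det_djB, det_mul_djB] at h1
  rw [← mul_assoc, ← pow_two, ← h1]
  congr 1
  rw [adjugate_fin_succ_eq_det_submatrix, adjugate_fin_succ_eq_det_submatrix,
    adjugate_fin_succ_eq_det_submatrix, adjugate_fin_succ_eq_det_submatrix]
  simp only [Fin.succAbove_zero, Fin.succAbove_last, Fin.val_zero, Fin.val_last,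
    Nat.add_zero, Nat.zero_add, pow_zero, one_mul]
  have hsign : ((-1 : α) ^ ((n + 1) + (n + 1))) = 1 := by
    rw [← two_mul, pow_mul]; norm_num
  have hs : (-1 : α) ^ (n + 1) * (-1 : α) ^ (n + 1) = 1 := by
    rw [← pow_add, ← two_mul, pow_mul]; norm_num
  rw [hsign, one_mul, mul_mul_mul_comm, hs, one_mul]
  ring
end Aux

/-- Desnanot–Jacobi / Dodgson condensation identity. -/
theorem dodgson_condensation_identity {R : Type*} [CommRing R] {n : ℕ}
    (A : Matrix (Fin (n + 2)) (Fin (n + 2)) R) :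
    A.det * (A.submatrix (fun i : Fin n => i.castSucc.succ)
        (fun j : Fin n => j.castSucc.succ)).det =
      (A.submatrix (fun i : Fin (n + 1) => i.castSucc)
          (fun j : Fin (n + 1) => j.castSucc)).det *
        (A.submatrix (fun i : Fin (n + 1) => i.succ)
          (fun j : Fin (n + 1) => j.succ)).det -
      (A.submatrix (fun i : Fin (n + 1) => i.castSucc)
          (fun j : Fin (n + 1) => j.succ)).det *
        (A.submatrix (fun i : Fin (n + 1) => i.succ)
          (fun j : Fin (n + 1) => j.castSucc)).det := by
  let A' := mvPolynomialX (Fin (n + 2)) (Fin (n + 2)) ℤ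
  let φ : MvPolynomial (Fin (n + 2) × Fin (n + 2)) ℤ →ₐ[ℤ] R :=
    MvPolynomial.aeval fun p : Fin (n + 2) × Fin (n + 2) => A p.1 p.2
  have hA : φ.mapMatrix A' = A := mvPolynomialX_mapMatrix_aeval ℤ A
  have hsub : ∀ {m : ℕ} (r c : Fin m → Fin (n + 2)),
      φ.mapMatrix (A'.submatrix r c) = A.submatrix r c := by
    intro m r c
    rw [AlgHom.mapMatrix_apply, ← submatrix_map, ← AlgHom.mapMatrix_apply, hA]
  have hgen : A'.det * (A'.submatrix (fun i : Fin n => i.castSucc.succ)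
        (fun j : Fin n => j.castSucc.succ)).det =
      (A'.submatrix (fun i : Fin (n + 1) => i.castSucc)
          (fun j : Fin (n + 1) => j.castSucc)).det *
        (A'.submatrix (fun i : Fin (n + 1) => i.succ)
          (fun j : Fin (n + 1) => j.succ)).det -
      (A'.submatrix (fun i : Fin (n + 1) => i.castSucc)
          (fun j : Fin (n + 1) => j.succ)).det *
        (A'.submatrix (fun i : Fin (n + 1) => i.succ)
          (fun j : Fin (n + 1) => j.castSucc)).det := by
    apply mul_left_cancel₀ (det_mvPolynomialX_ne_zero (Fin (n + 2)) ℤ)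
    exact dj_key A'
  have h2 := congrArg (fun x => φ x) hgen
  simp only [map_sub, _root_.map_mul, AlgHom.map_det, hA, hsub] at h2
  exact h2
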